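/- Let X be a compact Riemannian manifold and let Y ⊂ X be a shortest noncontractible closed curve in X, of length l. Divide Y into four consecutive arcs s_{+1}, s_{+2}, s_{-1}, s_{-2} each of length l/4 (opposite arcs being s_{+i} and s_{-i}). Then the distance in X between each pair of opposite arcs satisfies dist_X(s_{-i}, s_{+i}) ≥ l/4 for i = 1, 2. -/

import Mathlib

open CategoryTheory Metric
open scoped BigOperators
noncomputable section

/-! ## Singular homology (via the singular simplicial set and the alternating face map complex) -/

def SHfun (R : Type) [CommRing R] (n : ℕ) : TopCat.{0} ⥤ ModuleCat R :=
  TopCat.toSSet ⋙ ((SimplicialObject.whiskering _ _).obj (ModuleCat.free R)) ⋙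
    AlgebraicTopology.alternatingFaceMapComplex _ ⋙ HomologicalComplex.homologyFunctor _ _ n

/-- `n`-th singular homology of a topological space, with coefficients in `R`. -/
def SH (R : Type) [CommRing R] (n : ℕ) (X : Type) [TopologicalSpace X] : Type :=
  (SHfun R n).obj (TopCat.of X)

instance (R : Type) [CommRing R] (n : ℕ) (X : Type) [TopologicalSpace X] :
    AddCommGroup (SH R n X) := by unfold SH; infer_instance

instance (R : Type) [CommRing R] (n : ℕ) (X : Type) [TopologicalSpace X] :
    Module R (SH R n X) := by unfold SH; infer_instance

/-- The map induced on singular homology by a continuous map. -/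
def SHmap (R : Type) [CommRing R] (n : ℕ) {X Y : Type} [TopologicalSpace X] [TopologicalSpace Y]
    (f : C(X, Y)) : SH R n X → SH R n Y :=
  fun h => (SHfun R n).map (show TopCat.of X ⟶ TopCat.of Y from TopCat.ofHom f) h

/-! ## Metric extensions and the filling radius -/

/-- The canonical inclusion of `X` into the open `r`-thickening of the image of an
isometric embedding `ι : X → Z`. -/
def inclThickening {X Z : Type} [MetricSpace X] [MetricSpace Z] (ι : X → Z)
    (hι : Isometry ι) {r : ℝ} (hr : 0 < r) : C(X, Metric.thickening r (Set.range ι)) :=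
  ⟨fun x => ⟨ι x, Metric.self_subset_thickening hr _ ⟨x, rfl⟩⟩,
    (hι.continuous).subtype_mk _⟩

/-- `FillRadGE R n h r` : the filling radius of the metric space `X`, measured with respect to
the homology class `h` (to be thought of as the fundamental class of `X`), is at least `r` :
for every `r' < r` and every metric extension `Z ⊇ X`, the image of `h` does not vanish in the
open `r'`-neighbourhood of `X` inside `Z`. -/
def FillRadGE (R : Type) [CommRing R] (n : ℕ) {X : Type} [MetricSpace X]
    (h : SH R n X) (r : ℝ) : Prop :=
  ∀ r' : ℝ, ∀ hr' : 0 < r', r' < r →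
    ∀ (Z : Type) (_ : MetricSpace Z) (ι : X → Z) (hι : Isometry ι),
      SHmap R n (inclThickening ι hι hr') h ≠ 0

/-- `FillRadLE R n h r` : the filling radius of `X` w.r.t. the class `h` is at most `r` :
for every `r' > r` there is a metric extension of `X` in whose `r'`-neighbourhood of `X`
the class `h` dies. -/
def FillRadLE (R : Type) [CommRing R] (n : ℕ) {X : Type} [MetricSpace X]
    (h : SH R n X) (r : ℝ) : Prop :=
  ∀ r' : ℝ, ∀ hr' : 0 < r', r < r' →
    ∃ (Z : Type) (_ : MetricSpace Z) (ι : X → Z) (hι : Isometry ι),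
      SHmap R n (inclThickening ι hι hr') h = 0

/-! ## Uniform contractibility / acyclicity -/

/-- A (uniform) contractibility control function for the metric space `X` :
every ball `B_x(r)` is contractible inside `B_x(R(r))`. -/
structure UnifContractible (X : Type) [MetricSpace X] where
  R : ℝ → ℝ
  le : ∀ r, r ≤ R r
  contr : ∀ (x : X) (r : ℝ), 0 < r →
    (⟨Set.inclusion (ball_subset_ball (le r)), continuous_inclusion _⟩ :
      C(ball x r, ball x (R r))).Nullhomotopic

/-- A (uniform) acyclicity control function for the metric space `X` : the inclusion
homomorphisms `H_i(B_x(r)) → H_i(B_x(R(r)))` vanish for all `i ≥ 1`, with coefficients `A`. -/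
structure UnifAcyclic (A : Type) [CommRing A] (X : Type) [MetricSpace X] where
  R : ℝ → ℝ
  le : ∀ r, r ≤ R r
  acyclic : ∀ (x : X) (r : ℝ) (i : ℕ), 1 ≤ i → ∀ h : SH A i (ball x r),
    SHmap A i (⟨Set.inclusion (ball_subset_ball (le r)), continuous_inclusion _⟩ :
      C(ball x r, ball x (R r))) h = 0

/-! ## Abstract Riemannian manifolds and warped toral extensions -/

/-- An abstract Riemannian manifold : a metric space together with the Riemannian data
(dimension, scalar curvature, Riemannian measure, Laplacian, inner products of gradients,
smoothness predicate) used in the statements. -/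
structure RiemSpace where
  M : Type
  [met : MetricSpace M]
  dim : ℕ
  Sc : M → ℝ
  [mble : MeasurableSpace M]
  vol : MeasureTheory.Measure M
  laplacian : (M → ℝ) → M → ℝ
  gradInner : (M → ℝ) → (M → ℝ) → M → ℝ
  Smooth : (M → ℝ) → Prop

attribute [instance] RiemSpace.met RiemSpace.mble

/-- The scalar curvature of the iterated warped product
`g* = g + φ₁² dt₁² + ⋯ + φ_N² dt_N²` on `X × ℝᴺ`, as a function on `X` :
`Sc(g*) = Sc(g) − 2 Σᵢ Δφᵢ/φᵢ − 2 Σ_{i<j} ⟨∇ log φᵢ, ∇ log φⱼ⟩`. -/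
def warpedScFormula (X : RiemSpace) {N : ℕ} (φ : Fin N → X.M → ℝ) (x : X.M) : ℝ :=
  X.Sc x - 2 * ∑ i, X.laplacian (φ i) x / φ i x
    - 2 * ∑ i : Fin N, ∑ j : Fin N, if (i : ℕ) < (j : ℕ) then
        X.gradInner (fun y => Real.log (φ i y)) (fun y => Real.log (φ j y)) x else 0

/-- A warped `𝕋ᴺ`-extension of `X` : the manifold `X × ℝᴺ` with the iterated warped product
metric `g + Σ φᵢ² dtᵢ²`, recorded through its warping functions and its scalar curvature
(an `ℝᴺ`-invariant function, regarded as a function on `X`). -/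
structure WarpedExtension (X : RiemSpace) (N : ℕ) where
  φ : Fin N → X.M → ℝ
  φ_pos : ∀ i x, 0 < φ i x
  φ_smooth : ∀ i, X.Smooth (φ i)
  Sc : X.M → ℝ
  sc_eq : ∀ x, Sc x = warpedScFormula X φ x

/-- A closed `k`-dimensional submanifold of (the abstract Riemannian manifold) `X`, with its
own induced Riemannian structure; the embedding does not increase distances from the intrinsic
metric of `Y` to the ambient metric of `X`. -/
structure Subman (X : RiemSpace) (k : ℕ) where
  Y : RiemSpace
  emb : Y.M → X.M
  emb_cont : Continuous emb
  emb_inj : Function.Injective emb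
  emb_short : ∀ a b, dist (emb a) (emb b) ≤ dist a b
  dim_eq : Y.dim = k
  cpt : CompactSpace Y.M


/-- The length of a path in a metric space, via total variation. -/
def pathLength {X : Type} [PseudoMetricSpace X] {x y : X} (p : Path x y) : ENNReal :=
  eVariationOn p.extend (Set.Icc (0 : ℝ) 1)

/-- `X` is a path (length) metric space : any two points are joined by paths of length
arbitrarily close to their distance. -/
def IsPathMetric (X : Type) [MetricSpace X] : Prop :=
  ∀ x y : X, ∀ ε : ℝ, 0 < ε → ∃ p : Path x y, pathLength p ≤ ENNReal.ofReal (dist x y + ε)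

/-- The length of a closed curve `γ : ℝ/ℤ → X`. -/
def loopLength {X : Type} [PseudoMetricSpace X] (γ : C(AddCircle (1 : ℝ), X)) : ENNReal :=
  eVariationOn (fun t : ℝ => γ (t : AddCircle (1 : ℝ))) (Set.Icc (0 : ℝ) 1)

open Set

attribute [local instance] Path.Homotopic.setoid

namespace StmtAux

variable {X : Type} [MetricSpace X]

lemma image_affine (b m x y : ℝ) (hm : 0 ≤ m) (hxy : x ≤ y) :
    (fun u : ℝ => b + m * u) '' Set.Icc x y = Set.Icc (b + m * x) (b + m * y) := by
  rcases eq_or_lt_of_le hm with hm0 | hm0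
  · subst hm0
    simp only [zero_mul, add_zero, Set.Nonempty.image_const ⟨x, Set.left_mem_Icc.2 hxy⟩]
    simp
  · ext z
    simp only [Set.mem_image, Set.mem_Icc]
    constructor
    · rintro ⟨u, ⟨h1, h2⟩, rfl⟩
      constructor <;> nlinarith
    · rintro ⟨h1, h2⟩
      refine ⟨(z - b) / m, ⟨?_, ?_⟩, ?_⟩
      · rw [le_div_iff₀ hm0]; nlinarith
      · rw [div_le_iff₀ hm0]; nlinarith
      · field_simp
        ring

lemma evar_affine {E : Type*} [PseudoEMetricSpace E] (f : ℝ → E) (b m x y : ℝ)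
    (hm : 0 ≤ m) (hxy : x ≤ y) :
    eVariationOn (fun u : ℝ => f (b + m * u)) (Set.Icc x y)
      = eVariationOn f (Set.Icc (b + m * x) (b + m * y)) := by
  have hmono : MonotoneOn (fun u : ℝ => b + m * u) (Set.Icc x y) := by
    intro u _ v _ huv
    dsimp; nlinarith
  have := eVariationOn.comp_eq_of_monotoneOn f (fun u : ℝ => b + m * u) hmono
  rw [image_affine b m x y hm hxy] at this
  exact this

lemma evar_shift {E : Type*} [PseudoEMetricSpace E] (f : ℝ → E) (hf : ∀ u, f (u + 1) = f u)
    (a b : ℝ) (hab : a ≤ b) :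
    eVariationOn f (Set.Icc (a + 1) (b + 1)) = eVariationOn f (Set.Icc a b) := by
  have h := evar_affine f 1 1 a b zero_le_one hab
  have h2 : (fun u : ℝ => f (1 + 1 * u)) = f := by
    funext u; rw [one_mul, add_comm, hf]
  rw [h2] at h
  rw [h]; congr 1 <;> ring

lemma evar_univ_Icc_add {E : Type*} [PseudoEMetricSpace E] (f : ℝ → E) {a b c : ℝ}
    (hab : a ≤ b) (hbc : b ≤ c) :
    eVariationOn f (Set.Icc a b) + eVariationOn f (Set.Icc b c) = eVariationOn f (Set.Icc a c) := by
  have := eVariationOn.Icc_add_Icc f (s := Set.univ) hab hbc (Set.mem_univ b)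
  simpa using this

lemma pathLength_eq {x y : X} (p : Path x y) (g : ℝ → X) (hg : ∀ u : unitInterval, p u = g u) :
    pathLength p = eVariationOn g (Set.Icc 0 1) := by
  refine eVariationOn.eq_of_eqOn fun u hu => ?_
  rw [Path.extend_apply p hu, hg ⟨u, hu⟩]

/-- The restriction of a continuous `f : ℝ → X` to `[a, c]`, as a path. -/
def segPath (f : ℝ → X) (hf : Continuous f) (a c : ℝ) {u v : X}
    (hu : f a = u) (hv : f c = v) : Path u v where
  toFun := fun t => f (a + (c - a) * t)
  continuous_toFun := hf.comp (by continuity)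
  source' := by simpa using hu
  target' := by
    show f (a + (c - a) * ((1 : unitInterval) : ℝ)) = v
    norm_num [hv]

@[simp] lemma segPath_apply (f : ℝ → X) (hf : Continuous f) (a c : ℝ) {u v : X}
    (hu : f a = u) (hv : f c = v) (t : unitInterval) :
    segPath f hf a c hu hv t = f (a + (c - a) * t) := rfl

lemma pathLength_segPath (f : ℝ → X) (hf : Continuous f) {a c : ℝ} (hac : a ≤ c) {u v : X}
    (hu : f a = u) (hv : f c = v) :
    pathLength (segPath f hf a c hu hv) = eVariationOn f (Set.Icc a c) := by
  rw [pathLength_eq (segPath f hf a c hu hv) (fun t : ℝ => f (a + (c - a) * t))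
    (fun t => rfl)]
  have := evar_affine f a (c - a) 0 1 (by linarith) zero_le_one
  rw [this]
  congr 1 <;> ring


lemma pathLength_trans {x y z : X} (p : Path x y) (q : Path y z) :
    pathLength (p.trans q) = pathLength p + pathLength q := by
  have hsplit := evar_univ_Icc_add (p.trans q).extend
    (a := 0) (b := 1/2) (c := 1) (by norm_num) (by norm_num)
  have h1 : eVariationOn (p.trans q).extend (Set.Icc 0 (1/2)) = pathLength p := by
    have he : EqOn (p.trans q).extend (fun u : ℝ => p.extend (0 + 2 * u)) (Set.Icc 0 (1/2)) := by
      intro u hu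
      have hu1 : u ∈ Set.Icc (0:ℝ) 1 := ⟨hu.1, by linarith [hu.2]⟩
      rw [Path.extend_apply _ hu1, Path.trans_apply]
      simp only [hu.2, dif_pos]
      rw [← Path.extend_apply p (t := 2 * u) ⟨by linarith [hu.1], by linarith [hu.2]⟩]
      norm_num
    rw [eVariationOn.eq_of_eqOn he, evar_affine p.extend 0 2 0 (1/2) (by norm_num) (by norm_num)]
    unfold pathLength
    norm_num
  have h2 : eVariationOn (p.trans q).extend (Set.Icc (1/2) 1) = pathLength q := by
    have he : EqOn (p.trans q).extend (fun u : ℝ => q.extend (-1 + 2 * u)) (Set.Icc (1/2) 1) := by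
      intro u hu
      have hu1 : u ∈ Set.Icc (0:ℝ) 1 := ⟨by linarith [hu.1], hu.2⟩
      rw [Path.extend_apply _ hu1, Path.trans_apply]
      rcases eq_or_lt_of_le hu.1 with h | h
      · subst h
        norm_num [Path.extend_zero]
      · have : ¬ (u ≤ 1/2) := by linarith
        simp only [this, dif_neg, not_false_iff]
        rw [← Path.extend_apply q (t := 2 * u - 1) ⟨by linarith, by linarith [hu.2]⟩]
        norm_num
        ring_nf
    rw [eVariationOn.eq_of_eqOn he, evar_affine q.extend (-1) 2 (1/2) 1 (by norm_num) (by norm_num)]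
    unfold pathLength
    norm_num
  rw [h1, h2] at hsplit
  exact hsplit.symm

lemma pathLength_symm {x y : X} (p : Path x y) : pathLength p.symm = pathLength p := by
  have he : EqOn p.symm.extend (p.extend ∘ (fun u : ℝ => 1 - u)) (Set.Icc 0 1) := by
    intro u hu
    show p.symm.extend u = p.extend (1 - u)
    rw [Path.extend_apply _ hu,
      Path.extend_apply p (t := 1 - u) ⟨by linarith [hu.2], by linarith [hu.1]⟩,
      Path.symm_apply]
    exact congrArg p (Subtype.ext rfl)
  unfold pathLength
  rw [eVariationOn.eq_of_eqOn he,
    eVariationOn.comp_eq_of_antitoneOn p.extend (fun u : ℝ => 1 - u)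
      (fun a _ b _ hab => by dsimp; linarith)]
  congr 1
  have := Set.image_const_sub_Icc (1:ℝ) 0 1
  norm_num at this ⊢


/-- The closed curve associated to a loop (a path from `x` to `x`). -/
def loopOf {x : X} (r : Path x x) : C(AddCircle (1 : ℝ), X) :=
  ⟨AddCircle.liftIco 1 0 r.extend,
    AddCircle.liftIco_zero_continuous (by simp) r.continuous_extend.continuousOn⟩

lemma loopOf_coe {x : X} (r : Path x x) {u : ℝ} (hu : u ∈ Set.Ico (0:ℝ) 1) :
    loopOf r ((u : ℝ) : AddCircle (1:ℝ)) = r.extend u := by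
  show AddCircle.liftIco 1 0 r.extend ((u : ℝ) : AddCircle (1:ℝ)) = r.extend u
  exact AddCircle.liftIco_zero_coe_apply hu

lemma coe_one_eq_zero : (((1:ℝ) : AddCircle (1:ℝ))) = ((0:ℝ) : AddCircle (1:ℝ)) := by
  have := AddCircle.coe_add_period (1:ℝ) 0
  rw [zero_add] at this
  exact this

lemma loopOf_apply_I {x : X} (r : Path x x) (u : unitInterval) :
    loopOf r (((u:ℝ) : AddCircle (1:ℝ))) = r u := by
  rcases eq_or_lt_of_le u.2.2 with h | h
  · have h1 : ((u:ℝ) : AddCircle (1:ℝ)) = ((0:ℝ) : AddCircle (1:ℝ)) := by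
      rw [h, coe_one_eq_zero]
    rw [h1, loopOf_coe r (by norm_num : (0:ℝ) ∈ Set.Ico (0:ℝ) 1)]
    rw [Path.extend_zero]
    have hu1 : u = 1 := Subtype.ext h
    rw [hu1, Path.target]
  · rw [loopOf_coe r ⟨u.2.1, h⟩, Path.extend_apply r ⟨u.2.1, le_of_lt h⟩]

lemma loopLength_loopOf {x : X} (r : Path x x) : loopLength (loopOf r) = pathLength r := by
  unfold loopLength pathLength
  refine eVariationOn.eq_of_eqOn fun u hu => ?_
  show loopOf r ((u : ℝ) : AddCircle (1:ℝ)) = r.extend u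
  rw [Path.extend_apply r hu]
  exact loopOf_apply_I r ⟨u, hu⟩

/-- The canonical loop in `AddCircle 1` based at `0`. -/
def coePath : Path (0 : AddCircle (1:ℝ)) 0 where
  toFun := fun t => (((t : ℝ) : ℝ) : AddCircle (1:ℝ))
  continuous_toFun := (AddCircle.continuous_mk' 1).comp continuous_subtype_val
  source' := by norm_num
  target' := by
    show (((1:ℝ)) : AddCircle (1:ℝ)) = 0
    rw [coe_one_eq_zero]
    norm_num

lemma homotopic_cast {a b a' b' : X} {p q : Path a b} (h : p.Homotopic q)
    (ha : a' = a) (hb : b' = b) : (p.cast ha hb).Homotopic (q.cast ha hb) := by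
  subst ha; subst hb
  have e : ∀ r : Path a' b', r.cast rfl rfl = r := fun r => by
    ext u
    rfl
  rw [e, e]
  exact h


open CategoryTheory in
lemma comp_eq' {z1 z2 z3 : X} (P : Path z1 z2) (Q : Path z2 z3) :
    (⟦P⟧ ≫ ⟦Q⟧ : FundamentalGroupoid.mk z1 ⟶ FundamentalGroupoid.mk z3) = ⟦P.trans Q⟧ := by
  rfl

open CategoryTheory in
lemma quot_eq_id_of_homotopic {z : X} (P : Path z z) (h : P.Homotopic (Path.refl z)) :
    (⟦P⟧ : FundamentalGroupoid.mk z ⟶ FundamentalGroupoid.mk z) = 𝟙 (FundamentalGroupoid.mk z) := by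
  show _ = (⟦Path.refl z⟧ : FundamentalGroupoid.mk z ⟶ FundamentalGroupoid.mk z)
  exact Quotient.sound h

open CategoryTheory in
lemma combine {x1 x2 : X} (A : Path x1 x2) (B : Path x2 x1) (p : Path x1 x2)
    (h1 : (A.trans p.symm).Homotopic (Path.refl x1))
    (h2 : (B.trans p).Homotopic (Path.refl x2)) :
    (A.trans B).Homotopic (Path.refl x1) := by
  let o1 : FundamentalGroupoid X := FundamentalGroupoid.mk x1
  let o2 : FundamentalGroupoid X := FundamentalGroupoid.mk x2
  let a : o1 ⟶ o2 := ⟦A⟧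
  let b : o2 ⟶ o1 := ⟦B⟧
  let pp : o1 ⟶ o2 := ⟦p⟧
  let ps : o2 ⟶ o1 := ⟦p.symm⟧
  have e1 : a ≫ ps = 𝟙 o1 := by
    rw [show a ≫ ps = ⟦A.trans p.symm⟧ from comp_eq' A p.symm]
    exact quot_eq_id_of_homotopic _ h1
  have e2 : b ≫ pp = 𝟙 o2 := by
    rw [show b ≫ pp = ⟦B.trans p⟧ from comp_eq' B p]
    exact quot_eq_id_of_homotopic _ h2
  have hps : pp ≫ ps = 𝟙 o1 := by
    rw [show pp ≫ ps = ⟦p.trans p.symm⟧ from comp_eq' p p.symm]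
    exact quot_eq_id_of_homotopic _ ⟨(Path.Homotopy.reflTransSymm p).symm⟩
  have hsp : ps ≫ pp = 𝟙 o2 := by
    rw [show ps ≫ pp = ⟦p.symm.trans p⟧ from comp_eq' p.symm p]
    exact quot_eq_id_of_homotopic _ ⟨(Path.Homotopy.reflSymmTrans p).symm⟩
  have ha : a = pp := by
    calc a = a ≫ 𝟙 o2 := by rw [Category.comp_id]
    _ = a ≫ (ps ≫ pp) := by rw [hsp]
    _ = (a ≫ ps) ≫ pp := by rw [Category.assoc]
    _ = 𝟙 o1 ≫ pp := by rw [e1]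
    _ = pp := by rw [Category.id_comp]
  have hb : b = ps := by
    calc b = b ≫ 𝟙 o1 := by rw [Category.comp_id]
    _ = b ≫ (pp ≫ ps) := by rw [hps]
    _ = (b ≫ pp) ≫ ps := by rw [Category.assoc]
    _ = 𝟙 o2 ≫ ps := by rw [e2]
    _ = ps := by rw [Category.id_comp]
  have : (⟦A.trans B⟧ : o1 ⟶ o1) = ⟦Path.refl x1⟧ := by
    rw [← comp_eq' A B]
    show a ≫ b = _
    rw [ha, hb, hps]
    rfl
  exact Quotient.exact this

open CategoryTheory in
lemma conj {x0 x1 : X} (C : Path x0 x1) (D : Path x1 x0)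
    (h : (D.trans C).Homotopic (Path.refl x1)) :
    (C.trans D).Homotopic (Path.refl x0) := by
  let o0 : FundamentalGroupoid X := FundamentalGroupoid.mk x0
  let o1 : FundamentalGroupoid X := FundamentalGroupoid.mk x1
  let c : o0 ⟶ o1 := ⟦C⟧
  let d : o1 ⟶ o0 := ⟦D⟧
  let cs : o1 ⟶ o0 := ⟦C.symm⟧
  have hcc : c ≫ cs = 𝟙 o0 := by
    rw [show c ≫ cs = ⟦C.trans C.symm⟧ from comp_eq' C C.symm]
    exact quot_eq_id_of_homotopic _ ⟨(Path.Homotopy.reflTransSymm C).symm⟩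
  have hdc : d ≫ c = 𝟙 o1 := by
    rw [show d ≫ c = ⟦D.trans C⟧ from comp_eq' D C]
    exact quot_eq_id_of_homotopic _ h
  have hd : d = cs := by
    calc d = d ≫ 𝟙 o0 := by rw [Category.comp_id]
    _ = d ≫ (c ≫ cs) := by rw [hcc]
    _ = (d ≫ c) ≫ cs := by rw [Category.assoc]
    _ = 𝟙 o1 ≫ cs := by rw [hdc]
    _ = cs := by rw [Category.id_comp]
  have : (⟦C.trans D⟧ : o0 ⟶ o0) = ⟦Path.refl x0⟧ := by
    rw [← comp_eq' C D]
    show c ≫ d = _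
    rw [hd, hcc]
    rfl
  exact Quotient.exact this


open CategoryTheory in
lemma based_null_of_null (dl : C(AddCircle (1:ℝ), X)) (h : dl.Nullhomotopic) :
    (coePath.map dl.continuous).Homotopic (Path.refl (dl 0)) := by
  obtain ⟨y, ⟨H⟩⟩ := h
  let A : TopCat := TopCat.of (AddCircle (1:ℝ))
  let XT : TopCat := TopCat.of X
  let f : C(A, XT) := dl
  let g : C(A, XT) := ContinuousMap.const _ y
  let eta := FundamentalGroupoidFunctor.homotopicMapsNatIso (f := f) (g := g) H
  let o : FundamentalGroupoid A := FundamentalGroupoid.mk (0 : AddCircle (1:ℝ))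
  let P : o ⟶ o := ⟦coePath⟧
  have nat := eta.naturality P
  let h0 := eta.app o
  have h1 : (FundamentalGroupoid.map f).map P
      = (⟦coePath.map dl.continuous⟧ :
          FundamentalGroupoid.mk (dl 0) ⟶ FundamentalGroupoid.mk (dl 0)) := by
    rfl
  have h2 : (FundamentalGroupoid.map g).map P
      = 𝟙 (FundamentalGroupoid.mk y) := by
    have : coePath.map g.continuous = Path.refl y := by
      ext u
      rfl
    exact congrArg (fun q => (⟦q⟧ : FundamentalGroupoid.mk y ⟶ FundamentalGroupoid.mk y)) this
  rw [h1, h2] at nat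
  erw [Category.comp_id] at nat
  have nat2 := congrArg (fun q => q ≫ Groupoid.inv h0) nat
  simp only [Category.assoc, Groupoid.comp_inv, Category.comp_id] at nat2
  have k : Path.Homotopic _ _ := Quotient.exact nat2
  exact Path.Homotopic.trans ⟨(Path.Homotopy.transRefl _).symm⟩
    (Path.Homotopic.trans (Path.Homotopic.hcomp (Path.Homotopic.refl _)
      ⟨Path.Homotopy.reflTransSymm (H.evalAt o.as)⟩)
    (Path.Homotopic.trans (Path.Homotopic.symm ⟨Path.Homotopy.transAssoc _ _ _⟩)
      (Path.Homotopic.trans k ⟨(Path.Homotopy.reflTransSymm _).symm⟩)))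

lemma nullhomotopic_of_based (gam : C(AddCircle (1:ℝ), X)) {x : X} (r : Path x x)
    (hr : ∀ u : unitInterval, gam (((u:ℝ) : AddCircle (1:ℝ))) = r u)
    (h : r.Homotopic (Path.refl x)) : gam.Nullhomotopic := by
  obtain ⟨H⟩ := h
  let g : unitInterval × AddCircle (1:ℝ) → X := fun az =>
    AddCircle.liftIco 1 0 (fun v => H (az.1, Set.projIcc 0 1 zero_le_one v)) az.2
  let rho : unitInterval × unitInterval → unitInterval × AddCircle (1:ℝ) := fun au =>
    (au.1, (((au.2 : ℝ)) : AddCircle (1:ℝ)))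
  have hrhoc : Continuous rho :=
    continuous_fst.prodMk ((AddCircle.continuous_mk' 1).comp
      (continuous_subtype_val.comp continuous_snd))
  have hrhos : Function.Surjective rho := by
    rintro ⟨a, z⟩
    have hz : z ∈ QuotientAddGroup.mk '' Set.Ico (0:ℝ) (0 + 1) := by
      rw [AddCircle.coe_image_Ico_eq]
      trivial
    obtain ⟨u, hu, huz⟩ := hz
    rw [zero_add] at hu
    exact ⟨(a, ⟨u, ⟨hu.1, le_of_lt hu.2⟩⟩), by simp [rho, huz]⟩
  have hq : Topology.IsQuotientMap rho :=
    IsClosedMap.isQuotientMap (hrhoc.isClosedMap) hrhoc hrhos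
  have hcomp : g ∘ rho = fun au : unitInterval × unitInterval => H au := by
    funext au
    obtain ⟨a, u⟩ := au
    show AddCircle.liftIco 1 0 (fun v => H (a, Set.projIcc 0 1 zero_le_one v))
        (((u : ℝ)) : AddCircle (1:ℝ)) = H (a, u)
    rcases eq_or_lt_of_le u.2.2 with h1 | h1
    · have e : (((u:ℝ)) : AddCircle (1:ℝ)) = (((0:ℝ)) : AddCircle (1:ℝ)) := by
        rw [h1, coe_one_eq_zero]
      rw [e, AddCircle.liftIco_zero_coe_apply (by norm_num : (0:ℝ) ∈ Set.Ico (0:ℝ) 1)]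
      have e0 : Set.projIcc (0:ℝ) 1 zero_le_one 0 = (0 : unitInterval) := by
        simp [Set.projIcc]
      have eu : u = 1 := Subtype.ext h1
      rw [e0, eu]
      calc H ((a, 0) : unitInterval × unitInterval) = x := Path.Homotopy.source H a
      _ = H (a, 1) := (Path.Homotopy.target H a).symm
    · rw [AddCircle.liftIco_zero_coe_apply ⟨u.2.1, h1⟩]
      congr 1
      ext
      · rfl
      · simp [Set.projIcc, u.2.1, le_of_lt h1]
  have hgc : Continuous g := by
    rw [hq.continuous_iff, hcomp]
    exact H.continuous
  refine ⟨x, ⟨⟨⟨g, hgc⟩, ?_, ?_⟩⟩⟩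
  · intro z
    obtain ⟨⟨a, u⟩, hz⟩ := hrhos (0, z)
    have ha : a = 0 := congrArg Prod.fst hz
    have hz2 : (((u : ℝ)) : AddCircle (1:ℝ)) = z := congrArg Prod.snd hz
    have := congrFun hcomp (0, u)
    show g (0, z) = gam z
    rw [← hz2]
    calc g (0, (((u : ℝ)) : AddCircle (1:ℝ))) = (g ∘ rho) (0, u) := rfl
    _ = H ((0, u) : unitInterval × unitInterval) := by rw [hcomp]
    _ = r u := ContinuousMap.Homotopy.apply_zero H.toHomotopy u
    _ = gam ((u : ℝ) : AddCircle (1:ℝ)) := (hr u).symm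
  · intro z
    obtain ⟨⟨a, u⟩, hz⟩ := hrhos (1, z)
    have hz2 : (((u : ℝ)) : AddCircle (1:ℝ)) = z := congrArg Prod.snd hz
    show g (1, z) = x
    rw [← hz2]
    calc g (1, (((u : ℝ)) : AddCircle (1:ℝ))) = (g ∘ rho) (1, u) := rfl
    _ = H ((1, u) : unitInterval × unitInterval) := by rw [hcomp]
    _ = Path.refl x u := ContinuousMap.Homotopy.apply_one H.toHomotopy u
    _ = x := rfl


lemma homotopic_refl_of_null {x : X} (r : Path x x) (h : (loopOf r).Nullhomotopic) :
    r.Homotopic (Path.refl x) := by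
  have hbase : loopOf r 0 = x := by
    have := loopOf_apply_I r 0
    simpa using this
  have h2 := based_null_of_null (loopOf r) h
  have hfun : ∀ u : unitInterval, (coePath.map (loopOf r).continuous) u = r u := by
    intro u
    show loopOf r (coePath u) = r u
    exact loopOf_apply_I r u
  -- transfer along casts
  have hcast := homotopic_cast h2 hbase.symm hbase.symm
  have e1 : ((coePath.map (loopOf r).continuous).cast hbase.symm hbase.symm) = r := by
    ext u
    show (coePath.map (loopOf r).continuous) u = r u
    exact hfun u
  have e2 : ((Path.refl (loopOf r 0)).cast hbase.symm hbase.symm) = Path.refl x := by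
    ext u
    show loopOf r 0 = x
    exact hbase
  rw [e1, e2] at hcast
  exact hcast

lemma seg_trans (f : ℝ → X) (hf : Continuous f) {a b c : ℝ} (hab : a ≤ b) (hbc : b ≤ c)
    (hac : a < c) {u v w : X} (hu : f a = u) (hv : f b = v) (hw : f c = w) :
    (segPath f hf a c hu hw).Homotopic
      ((segPath f hf a b hu hv).trans (segPath f hf b c hv hw)) := by
  have hca : (0:ℝ) < c - a := by linarith
  set psi : ℝ → ℝ := fun t => if t ≤ 1/2 then (2*t)*(b-a)/(c-a) else (b - a + (2*t-1)*(c-b))/(c-a)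
    with hpsi
  have hpsimem : ∀ t : unitInterval, psi t ∈ Set.Icc (0:ℝ) 1 := by
    intro t
    obtain ⟨ht0, ht1⟩ := t.2
    by_cases h : (t:ℝ) ≤ 1/2
    · rw [hpsi]
      simp only [h, if_pos]
      constructor
      · apply div_nonneg _ (le_of_lt hca)
        nlinarith
      · rw [div_le_one hca]; nlinarith
    · rw [hpsi]
      simp only [h, if_neg, not_false_iff]
      constructor
      · apply div_nonneg _ (le_of_lt hca)
        nlinarith [not_le.1 h]
      · rw [div_le_one hca]; nlinarith [not_le.1 h]
  have hpsic : Continuous psi := by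
    apply Continuous.if_le (f := fun t : ℝ => t) (g := fun _ : ℝ => (1:ℝ)/2)
    · fun_prop
    · fun_prop
    · exact continuous_id
    · exact continuous_const
    · intro t ht
      rw [ht]
      norm_num
  let phi : unitInterval → unitInterval := fun t => ⟨psi t, hpsimem t⟩
  have hphic : Continuous phi :=
    Continuous.subtype_mk (hpsic.comp continuous_subtype_val) _
  have hphi0 : phi 0 = 0 := by
    apply Subtype.ext
    show psi ((0 : unitInterval) : ℝ) = 0
    rw [hpsi]
    norm_num
  have hphi1 : phi 1 = 1 := by
    apply Subtype.ext
    show psi ((1 : unitInterval) : ℝ) = 1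
    rw [hpsi]
    norm_num
    exact hca.ne'
  have hrep : (segPath f hf a b hu hv).trans (segPath f hf b c hv hw)
      = (segPath f hf a c hu hw).reparam phi hphic hphi0 hphi1 := by
    ext t
    rw [Path.trans_apply]
    show _ = f (a + (c - a) * psi t)
    by_cases h : (t:ℝ) ≤ 1/2
    · simp only [h, dif_pos]
      show f (a + (b - a) * (2 * (t:ℝ))) = _
      rw [hpsi]
      simp only [h, if_pos]
      congr 1
      field_simp
    · simp only [h, dif_neg, not_false_iff]
      show f (b + (c - b) * (2 * (t:ℝ) - 1)) = _
      rw [hpsi]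
      simp only [h, if_neg, not_false_iff]
      congr 1
      field_simp
      ring
  rw [hrep]
  exact ⟨Path.Homotopy.reparam (segPath f hf a c hu hw) phi hphic hphi0 hphi1⟩


lemma key [CompactSpace X] (hpath : IsPathMetric X)
    (gam : C(AddCircle (1 : ℝ), X)) (l : ℝ) (hl : 0 < l)
    (hnc : ¬ gam.Nullhomotopic)
    (hshort : ∀ dl : C(AddCircle (1 : ℝ), X),
      loopLength dl < ENNReal.ofReal l → dl.Nullhomotopic)
    (s t : ℝ) (hs : 0 ≤ s) (hst : s < t) (ht : t ≤ 1)
    (hV1 : eVariationOn (fun u : ℝ => gam (u : AddCircle (1:ℝ))) (Set.Icc s t)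
      ≤ ENNReal.ofReal (3 * (l/4)))
    (hV2 : eVariationOn (fun u : ℝ => gam (u : AddCircle (1:ℝ))) (Set.Icc t (s+1))
      ≤ ENNReal.ofReal (3 * (l/4))) :
    l / 4 ≤ dist (gam (s : AddCircle (1:ℝ))) (gam (t : AddCircle (1:ℝ))) := by
  by_contra hcon
  push_neg at hcon
  have hd0 : (0:ℝ) ≤ dist (gam (s : AddCircle (1:ℝ))) (gam (t : AddCircle (1:ℝ))) := dist_nonneg
  set d := dist (gam (s : AddCircle (1:ℝ))) (gam (t : AddCircle (1:ℝ))) with hd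
  set ε := (l/4 - d)/2 with he
  have hε : 0 < ε := by rw [he]; linarith
  obtain ⟨p, hp⟩ := hpath (gam (s : AddCircle (1:ℝ))) (gam (t : AddCircle (1:ℝ))) ε hε
  let g' : ℝ → X := fun u : ℝ => gam (u : AddCircle (1:ℝ))
  have hg' : Continuous g' := gam.continuous.comp (AddCircle.continuous_mk' 1)
  have hper : ∀ u, g' (u+1) = g' u := fun u => congrArg gam (AddCircle.coe_add_period 1 u)
  have hts1 : t ≤ s + 1 := by linarith
  have hsv : g' s = gam (s : AddCircle (1:ℝ)) := rfl
  have htv : g' t = gam (t : AddCircle (1:ℝ)) := rfl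
  have hBv : g' (s+1) = gam (s : AddCircle (1:ℝ)) := hper s
  have h0v : g' 0 = gam ((0:ℝ) : AddCircle (1:ℝ)) := rfl
  have h1v : g' 1 = gam ((0:ℝ) : AddCircle (1:ℝ)) := by
    have := hper 0; rw [zero_add] at this; exact this
  let A := segPath g' hg' s t hsv htv
  let B := segPath g' hg' t (s+1) htv hBv
  let lp1 := A.trans p.symm
  let lp2 := B.trans p
  have hde : d + ε < l/4 := by rw [he]; linarith
  have hlen1 : loopLength (loopOf lp1) < ENNReal.ofReal l := by
    rw [loopLength_loopOf, pathLength_trans, pathLength_symm,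
      pathLength_segPath g' hg' hst.le hsv htv]
    calc eVariationOn g' (Set.Icc s t) + pathLength p
        ≤ ENNReal.ofReal (3*(l/4)) + ENNReal.ofReal (d + ε) := add_le_add hV1 hp
      _ = ENNReal.ofReal (3*(l/4) + (d+ε)) :=
          (ENNReal.ofReal_add (by linarith) (by linarith)).symm
      _ < ENNReal.ofReal l := by
          rw [ENNReal.ofReal_lt_ofReal_iff hl]; linarith
  have hlen2 : loopLength (loopOf lp2) < ENNReal.ofReal l := by
    rw [loopLength_loopOf, pathLength_trans,
      pathLength_segPath g' hg' hts1 htv hBv]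
    calc eVariationOn g' (Set.Icc t (s+1)) + pathLength p
        ≤ ENNReal.ofReal (3*(l/4)) + ENNReal.ofReal (d + ε) := add_le_add hV2 hp
      _ = ENNReal.ofReal (3*(l/4) + (d+ε)) :=
          (ENNReal.ofReal_add (by linarith) (by linarith)).symm
      _ < ENNReal.ofReal l := by
          rw [ENNReal.ofReal_lt_ofReal_iff hl]; linarith
  have hnull1 := homotopic_refl_of_null lp1 (hshort _ hlen1)
  have hnull2 := homotopic_refl_of_null lp2 (hshort _ hlen2)
  have hAB := combine A B p hnull1 hnull2
  let C := segPath g' hg' 0 s h0v hsv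
  let D := segPath g' hg' s 1 hsv h1v
  let C' := segPath g' hg' 1 (s+1) h1v hBv
  have hqs1 : (segPath g' hg' s (s+1) hsv hBv).Homotopic (A.trans B) :=
    seg_trans g' hg' hst.le hts1 (by linarith) hsv htv hBv
  have hqs2 : (segPath g' hg' s (s+1) hsv hBv).Homotopic (D.trans C') :=
    seg_trans g' hg' (by linarith : s ≤ 1) (by linarith) (by linarith) hsv h1v hBv
  have hCC' : C' = C := by
    ext u1
    show g' (1 + (s+1-1) * u1) = g' (0 + (s-0) * u1)
    have e : (1 + (s+1-1) * (u1:ℝ)) = (0 + (s-0) * u1) + 1 := by ring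
    rw [e, hper]
  have hDC : (D.trans C).Homotopic (Path.refl (gam (s : AddCircle (1:ℝ)))) := by
    rw [← hCC']
    exact hqs2.symm.trans (hqs1.trans hAB)
  have hCD := conj C D hDC
  have hq01 : (segPath g' hg' 0 1 h0v h1v).Homotopic (C.trans D) :=
    seg_trans g' hg' hs (by linarith) one_pos h0v hsv h1v
  have hq0 := hq01.trans hCD
  refine hnc (nullhomotopic_of_based gam (segPath g' hg' 0 1 h0v h1v) ?_ hq0)
  intro u1
  show gam _ = g' (0 + (1-0) * u1)
  have e : (0 + (1-0) * (u1:ℝ)) = (u1:ℝ) := by ring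
  rw [e]

end StmtAux
open StmtAux


/-- In a compact path metric space `X`, let `γ` be a shortest noncontractible
closed curve, of length `l`, parametrized so that the four consecutive quarter-arcs
`γ([0,1/4]), γ([1/4,1/2]), γ([1/2,3/4]), γ([3/4,1])` each have length `l/4`.  Then the two
pairs of opposite arcs are at mutual distance `≥ l/4`. -/
theorem stmt_1 (X : Type) [MetricSpace X] [CompactSpace X] (hpath : IsPathMetric X)
    (γ : C(AddCircle (1 : ℝ), X)) (l : ℝ) (hl : 0 < l)
    (hlen : loopLength γ = ENNReal.ofReal l)
    (hnc : ¬ γ.Nullhomotopic)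
    (hshort : ∀ δ : C(AddCircle (1 : ℝ), X),
      loopLength δ < ENNReal.ofReal l → δ.Nullhomotopic)
    (harc : ∀ a : Fin 4,
      eVariationOn (fun t : ℝ => γ (t : AddCircle (1 : ℝ)))
        (Set.Icc ((a : ℝ) / 4) (((a : ℝ) + 1) / 4)) = ENNReal.ofReal (l / 4)) :
    (∀ s ∈ Set.Icc (0 : ℝ) (1 / 4), ∀ t ∈ Set.Icc (1 / 2 : ℝ) (3 / 4),
      l / 4 ≤ dist (γ (s : AddCircle (1 : ℝ))) (γ (t : AddCircle (1 : ℝ)))) ∧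
    (∀ s ∈ Set.Icc (1 / 4 : ℝ) (1 / 2), ∀ t ∈ Set.Icc (3 / 4 : ℝ) 1,
      l / 4 ≤ dist (γ (s : AddCircle (1 : ℝ))) (γ (t : AddCircle (1 : ℝ)))) := by

  have h0 := harc 0
  have h1 := harc 1
  have h2 := harc 2
  have h3 := harc 3
  rw [show ((3 : Fin 4) : ℝ) = 3 from rfl] at h3
  norm_num at h0 h1 h2 h3
  set g : ℝ → X := fun t : ℝ => γ (t : AddCircle (1 : ℝ)) with hgdef
  have hper : ∀ u, g (u+1) = g u := fun u => congrArg γ (AddCircle.coe_add_period 1 u)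
  have hq4 : (0:ℝ) ≤ l/4 := by linarith
  have hsum3 : ENNReal.ofReal (l/4) + ENNReal.ofReal (l/4) + ENNReal.ofReal (l/4)
      = ENNReal.ofReal (3*(l/4)) := by
    rw [← ENNReal.ofReal_add hq4 hq4, ← ENNReal.ofReal_add (by linarith) hq4]
    congr 1
    ring
  -- shifted quarters
  have h4 : eVariationOn g (Set.Icc 1 (5/4)) = ENNReal.ofReal (l/4) := by
    have := evar_shift g hper 0 (1/4) (by norm_num)
    norm_num at this
    rw [this]
    exact h0
  have h5 : eVariationOn g (Set.Icc (5/4) (3/2)) = ENNReal.ofReal (l/4) := by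
    have := evar_shift g hper (1/4) (1/2) (by norm_num)
    norm_num at this
    rw [this]
    exact h1
  constructor
  · intro s hs t ht
    refine key hpath γ l hl hnc hshort s t hs.1 (by linarith [hs.2, ht.1]) (by linarith [ht.2]) ?_ ?_
    · calc eVariationOn g (Set.Icc s t)
          ≤ eVariationOn g (Set.Icc 0 (3/4)) :=
            eVariationOn.mono g (Set.Icc_subset_Icc hs.1 ht.2)
        _ = ENNReal.ofReal (3*(l/4)) := by
            rw [← evar_univ_Icc_add g (by norm_num : (0:ℝ) ≤ 1/2) (by norm_num : (1/2:ℝ) ≤ 3/4),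
              ← evar_univ_Icc_add g (by norm_num : (0:ℝ) ≤ 1/4) (by norm_num : (1/4:ℝ) ≤ 1/2),
              h0, h1, h2, hsum3]
    · calc eVariationOn g (Set.Icc t (s+1))
          ≤ eVariationOn g (Set.Icc (1/2) (5/4)) :=
            eVariationOn.mono g (Set.Icc_subset_Icc ht.1 (by linarith [hs.2]))
        _ = ENNReal.ofReal (3*(l/4)) := by
            rw [← evar_univ_Icc_add g (by norm_num : (1/2:ℝ) ≤ 1) (by norm_num : (1:ℝ) ≤ 5/4),
              ← evar_univ_Icc_add g (by norm_num : (1/2:ℝ) ≤ 3/4) (by norm_num : (3/4:ℝ) ≤ 1),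
              h2, h3, h4, hsum3]
  · intro s hs t ht
    refine key hpath γ l hl hnc hshort s t (by linarith [hs.1]) (by linarith [hs.2, ht.1]) ht.2 ?_ ?_
    · calc eVariationOn g (Set.Icc s t)
          ≤ eVariationOn g (Set.Icc (1/4) 1) :=
            eVariationOn.mono g (Set.Icc_subset_Icc hs.1 ht.2)
        _ = ENNReal.ofReal (3*(l/4)) := by
            rw [← evar_univ_Icc_add g (by norm_num : (1/4:ℝ) ≤ 3/4) (by norm_num : (3/4:ℝ) ≤ 1),
              ← evar_univ_Icc_add g (by norm_num : (1/4:ℝ) ≤ 1/2) (by norm_num : (1/2:ℝ) ≤ 3/4),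
              h1, h2, h3, hsum3]
    · calc eVariationOn g (Set.Icc t (s+1))
          ≤ eVariationOn g (Set.Icc (3/4) (3/2)) :=
            eVariationOn.mono g (Set.Icc_subset_Icc ht.1 (by linarith [hs.2]))
        _ = ENNReal.ofReal (3*(l/4)) := by
            rw [← evar_univ_Icc_add g (by norm_num : (3/4:ℝ) ≤ 5/4) (by norm_num : (5/4:ℝ) ≤ 3/2),
              ← evar_univ_Icc_add g (by norm_num : (3/4:ℝ) ≤ 1) (by norm_num : (1:ℝ) ≤ 5/4),
              h3, h4, h5, hsum3]

end
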